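/- A quadratic control system ẋ = Ax + H(x⊗x) + Bu with A = J - R (J skew-symmetric, R symmetric positive definite) and H energy-preserving is bounded-input bounded-state stable: for every essentially bounded input u and every initial condition x₀, every solution x(t) remains bounded for t ≥ 0. -/

import Mathlib

open Matrix

/-- The Euclidean 2-norm of a vector in `ℝⁿ`. -/
noncomputable def norm2 {n : ℕ} (v : Fin n → ℝ) : ℝ := Real.sqrt (v ⬝ᵥ v)

/-- The Kronecker product of two vectors, `(z ⊗ w)_{(j,k)} = z_j w_k`. -/
def kron {n : ℕ} (z w : Fin n → ℝ) : Fin n × Fin n → ℝ := fun p => z p.1 * w p.2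

/-- Cauchy–Schwarz for dot products. -/
lemma dot_sq_le {n : ℕ} (a b : Fin n → ℝ) : (a ⬝ᵥ b) ^ 2 ≤ (a ⬝ᵥ a) * (b ⬝ᵥ b) := by
  simpa [dotProduct, pow_two] using
    Finset.sum_mul_sq_le_sq_mul_sq Finset.univ a b

lemma dot_self_nonneg {n : ℕ} (a : Fin n → ℝ) : 0 ≤ a ⬝ᵥ a :=
  Finset.sum_nonneg fun _ _ => mul_self_nonneg _

/-- A crude operator bound for `B.mulVec`. -/
lemma mulVec_dot_le {n m : ℕ} (B : Matrix (Fin n) (Fin m) ℝ) (v : Fin m → ℝ) :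
    (B.mulVec v) ⬝ᵥ (B.mulVec v) ≤ (∑ i, ∑ j, B i j ^ 2) * (v ⬝ᵥ v) := by
  rw [Finset.sum_mul]
  refine Finset.sum_le_sum fun i _ => ?_
  have := dot_sq_le (B i) v
  simpa [dotProduct, mulVec, pow_two] using this

/-- Positive definite matrices have a positive quadratic-form lower bound. -/
lemma posdef_lb {n : ℕ} {R : Matrix (Fin n) (Fin n) ℝ} (hR : R.PosDef) :
    ∃ c > 0, ∀ v : Fin n → ℝ, c * (v ⬝ᵥ v) ≤ v ⬝ᵥ R.mulVec v := by
  rcases Nat.eq_zero_or_pos n with hn | hn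
  · refine ⟨1, one_pos, fun v => ?_⟩
    subst hn
    simp [dotProduct]
  · -- the unit sphere for the dot product
    set S : Set (Fin n → ℝ) := {v | v ⬝ᵥ v = 1} with hS
    have hq : Continuous fun v : Fin n → ℝ => v ⬝ᵥ v := by
      unfold dotProduct
      exact continuous_finset_sum _ fun i _ =>
        ((continuous_apply i).mul (continuous_apply i))
    have hQ : Continuous fun v : Fin n → ℝ => v ⬝ᵥ R.mulVec v := by
      unfold dotProduct Matrix.mulVec
      exact continuous_finset_sum _ fun i _ => (continuous_apply i).mul
        (continuous_finset_sum _ fun j _ => (continuous_const.mul (continuous_apply j)))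
    have hclosed : IsClosed S := isClosed_eq hq continuous_const
    have hbdd : Bornology.IsBounded S := by
      apply Bornology.IsBounded.subset (Metric.isBounded_closedBall (x := (0 : Fin n → ℝ)) (r := 1))
      intro v hv
      simp only [Metric.mem_closedBall, dist_zero_right]
      rw [pi_norm_le_iff_of_nonneg zero_le_one]
      intro i
      rw [Real.norm_eq_abs, abs_le_one_iff_mul_self_le_one]
      calc v i * v i ≤ v ⬝ᵥ v := by
            unfold dotProduct
            exact Finset.single_le_sum (fun j _ => mul_self_nonneg (v j)) (Finset.mem_univ i)
        _ = 1 := hv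
    have hcpt : IsCompact S := Metric.isCompact_of_isClosed_isBounded hclosed hbdd
    have hne : S.Nonempty := by
      refine ⟨Pi.single ⟨0, hn⟩ 1, ?_⟩
      simp [hS, dotProduct, Pi.single_apply]
    obtain ⟨v₀, hv₀S, hmin'⟩ := hcpt.exists_isMinOn hne hQ.continuousOn
    have hmin : ∀ w ∈ S, v₀ ⬝ᵥ R.mulVec v₀ ≤ w ⬝ᵥ R.mulVec w := fun w hw => hmin' hw
    have hv₀ne : v₀ ≠ 0 := by
      intro h
      rw [h] at hv₀S
      simp [hS, dotProduct] at hv₀S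
    have hcpos : 0 < v₀ ⬝ᵥ R.mulVec v₀ := by
      have := hR.dotProduct_mulVec_pos hv₀ne
      simpa using this
    refine ⟨_, hcpos, fun v => ?_⟩
    by_cases hv : v = 0
    · simp [hv]
    · have hvv : 0 < v ⬝ᵥ v :=
        lt_of_le_of_ne (dot_self_nonneg v) (fun h => hv (dotProduct_self_eq_zero.mp h.symm))
      set s : ℝ := Real.sqrt (v ⬝ᵥ v) with hs
      have hspos : 0 < s := Real.sqrt_pos.mpr hvv
      have hs2 : s * s = v ⬝ᵥ v := Real.mul_self_sqrt (le_of_lt hvv)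
      set w : Fin n → ℝ := s⁻¹ • v with hw
      have hwS : w ∈ S := by
        simp only [hS, Set.mem_setOf_eq, hw, smul_dotProduct, dotProduct_smul, smul_eq_mul]
        rw [← hs2]
        field_simp
      have h1 := hmin w hwS
      have hwq : w ⬝ᵥ R.mulVec w = (s⁻¹ * s⁻¹) * (v ⬝ᵥ R.mulVec v) := by
        simp only [hw, smul_dotProduct, dotProduct_smul, Matrix.mulVec_smul, smul_eq_mul]
        ring
      rw [hwq] at h1
      have : (v₀ ⬝ᵥ R.mulVec v₀) * (s * s) ≤ v ⬝ᵥ R.mulVec v := by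
        rw [← sub_nonneg]
        have key : v ⬝ᵥ R.mulVec v - (v₀ ⬝ᵥ R.mulVec v₀) * (s * s)
            = (s * s) * ((s⁻¹ * s⁻¹) * (v ⬝ᵥ R.mulVec v) - v₀ ⬝ᵥ R.mulVec v₀) := by
          field_simp
        rw [key]
        exact mul_nonneg (by positivity) (by linarith)
      calc (v₀ ⬝ᵥ R.mulVec v₀) * (v ⬝ᵥ v) = (v₀ ⬝ᵥ R.mulVec v₀) * (s * s) := by rw [hs2]
        _ ≤ v ⬝ᵥ R.mulVec v := this

/-- A quadratic control system `ẋ = (J-R)x + H(x⊗x) + Bu` with `J`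
skew-symmetric, `R` symmetric positive definite and `H` energy-preserving is
bounded-input bounded-state stable: any solution corresponding to a bounded
input remains bounded for `t ≥ 0`. -/
theorem stmt_8 {n m : ℕ} (J R : Matrix (Fin n) (Fin n) ℝ)
    (B : Matrix (Fin n) (Fin m) ℝ)
    (H : Matrix (Fin n) (Fin n × Fin n) ℝ)
    (hJ : Jᵀ = -J) (hR : R.PosDef)
    (hEP : ∀ z : Fin n → ℝ, z ⬝ᵥ H.mulVec (kron z z) = 0)
    (u : ℝ → Fin m → ℝ) (U : ℝ) (hU : ∀ t : ℝ, norm2 (u t) ≤ U)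
    (x : ℝ → Fin n → ℝ)
    (hx : ∀ t : ℝ, HasDerivAt x
      ((J - R).mulVec (x t) + H.mulVec (kron (x t) (x t)) + B.mulVec (u t)) t) :
    ∃ M : ℝ, ∀ t : ℝ, 0 ≤ t → norm2 (x t) ≤ M := by
  obtain ⟨c, hc, hcR⟩ := posdef_lb hR
  set CB : ℝ := ∑ i, ∑ j, B i j ^ 2 with hCB
  have hCBnn : 0 ≤ CB := Finset.sum_nonneg fun i _ => Finset.sum_nonneg fun j _ => sq_nonneg _
  have hUnn : 0 ≤ U := le_trans (Real.sqrt_nonneg _) (hU 0)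
  -- the Lyapunov function
  set f : ℝ → ℝ := fun t => x t ⬝ᵥ x t with hf
  set v : ℝ → Fin n → ℝ := fun t =>
    (J - R).mulVec (x t) + H.mulVec (kron (x t) (x t)) + B.mulVec (u t) with hv
  have hf' : ∀ t, HasDerivAt f (2 * (x t ⬝ᵥ v t)) t := by
    intro t
    have hcomp : ∀ i, HasDerivAt (fun s => x s i) (v t i) t :=
      fun i => (hasDerivAt_pi.mp (hx t)) i
    have : HasDerivAt (fun s => ∑ i, x s i * x s i)
        (∑ i, (v t i * x t i + x t i * v t i)) t :=
      HasDerivAt.fun_sum fun i _ => (hcomp i).mul (hcomp i)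
    have hfe : (fun s => ∑ i, x s i * x s i) = f := by
      funext s; simp [hf, dotProduct]
    have hde : (∑ i, (v t i * x t i + x t i * v t i)) = 2 * (x t ⬝ᵥ v t) := by
      simp only [dotProduct]
      rw [Finset.mul_sum]
      exact Finset.sum_congr rfl fun i _ => by ring
    rw [hfe, hde] at this
    exact this
  set ε : ℝ := CB * U ^ 2 / c with hε
  have hεnn : 0 ≤ ε := by positivity
  -- key differential inequality
  have hbound : ∀ t, 2 * (x t ⬝ᵥ v t) ≤ (-c) * f t + ε := by
    intro t
    have hsplit : x t ⬝ᵥ v t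
        = x t ⬝ᵥ J.mulVec (x t) - x t ⬝ᵥ R.mulVec (x t)
          + x t ⬝ᵥ H.mulVec (kron (x t) (x t)) + x t ⬝ᵥ B.mulVec (u t) := by
      simp [hv, dotProduct_add, Matrix.sub_mulVec, dotProduct_sub]
    have hJ0 : x t ⬝ᵥ J.mulVec (x t) = 0 := by
      have h1 : x t ⬝ᵥ J.mulVec (x t) = Jᵀ.mulVec (x t) ⬝ᵥ x t := by
        rw [Matrix.dotProduct_mulVec, ← Matrix.mulVec_transpose]
      rw [hJ] at h1
      have h2 : (-J).mulVec (x t) ⬝ᵥ x t = -(x t ⬝ᵥ J.mulVec (x t)) := by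
        rw [Matrix.neg_mulVec, neg_dotProduct, dotProduct_comm]
      rw [h2] at h1
      linarith
    have hH0 := hEP (x t)
    -- bound the input term
    have hu2 : u t ⬝ᵥ u t ≤ U ^ 2 := by
      have h1 := hU t
      have h2 : Real.sqrt (u t ⬝ᵥ u t) ≤ U := h1
      nlinarith [Real.sq_sqrt (dot_self_nonneg (u t)), Real.sqrt_nonneg (u t ⬝ᵥ u t)]
    have hBu : (B.mulVec (u t)) ⬝ᵥ (B.mulVec (u t)) ≤ CB * U ^ 2 :=
      le_trans (mulVec_dot_le B (u t)) (mul_le_mul_of_nonneg_left hu2 hCBnn)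
    have hcross : 2 * (x t ⬝ᵥ B.mulVec (u t)) ≤ c * (x t ⬝ᵥ x t) + ε := by
      set a := x t ⬝ᵥ B.mulVec (u t)
      set p := x t ⬝ᵥ x t
      set q := (B.mulVec (u t)) ⬝ᵥ (B.mulVec (u t))
      have hCS : a ^ 2 ≤ p * q := dot_sq_le _ _
      have hpnn : 0 ≤ p := dot_self_nonneg _
      have hqnn : 0 ≤ q := dot_self_nonneg _
      have hqε : q ≤ c * ε := by
        have hce : c * ε = CB * U ^ 2 := by
          rw [hε]; field_simp
        linarith
      -- 2a ≤ c p + q/c ≤ c p + ε, via (c p - q/c type AM-GM); work with squares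
      nlinarith [hCS, mul_le_mul_of_nonneg_left hqε hpnn, sq_nonneg (c * p - ε), hpnn, hεnn,
        mul_nonneg (mul_nonneg hc.le hpnn) hεnn, mul_nonneg hc.le hpnn]
    have hRb := hcR (x t)
    rw [hsplit, hJ0, hH0]
    simp only [hf]
    linarith
  -- Gronwall on [0, b] for every b
  have hfc : Continuous f := by
    have : ∀ t, ContinuousAt f t := fun t => ((hf' t).differentiableAt).continuousAt
    exact continuous_iff_continuousAt.mpr this
  set M2 : ℝ := f 0 + ε / c with hM2
  have hf0nn : 0 ≤ f 0 := dot_self_nonneg _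
  have hfle : ∀ t, 0 ≤ t → f t ≤ M2 := by
    intro b hb
    have key := le_gronwallBound_of_liminf_deriv_right_le (f := f)
      (f' := fun t => 2 * (x t ⬝ᵥ v t)) (δ := f 0) (K := -c) (ε := ε) (a := 0) (b := b)
      hfc.continuousOn
      (fun t _ r hr => ((hf' t).hasDerivWithinAt (s := Set.Ici t)).liminf_right_slope_le hr)
      le_rfl (fun t _ => hbound t) b (Set.mem_Icc.mpr ⟨hb, le_rfl⟩)
    refine le_trans key ?_
    rw [gronwallBound_of_K_ne_0 (neg_ne_zero.mpr (ne_of_gt hc))]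
    have hexp1 : Real.exp (-c * (b - 0)) ≤ 1 := by
      rw [Real.exp_le_one_iff]
      nlinarith
    have hexp0 : 0 < Real.exp (-c * (b - 0)) := Real.exp_pos _
    have h2 : ε / (-c) * (Real.exp (-c * (b - 0)) - 1) = ε / c * (1 - Real.exp (-c * (b - 0))) := by
      rw [div_neg]; ring
    have h3 : ε / c * (1 - Real.exp (-c * (b - 0))) ≤ ε / c := by
      have h4 : 0 ≤ ε / c := by positivity
      nlinarith
    rw [hM2]
    have h5 : f 0 * Real.exp (-c * (b - 0)) ≤ f 0 :=
      by nlinarith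
    linarith [h2 ▸ h3]
  refine ⟨Real.sqrt M2, fun t ht => ?_⟩
  unfold norm2
  exact Real.sqrt_le_sqrt (hfle t ht)
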